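/- Let η and N be natural numbers with 3 ≤ η ≤ N and N odd. Then 2^(N−η+3) · (3N/2) / (2^(N+1) − 1) > 4N · sin²(π/2^η); that is, d_min-QAM(N,η)² > d_min-PSK(N,η)². -/

import Mathlib

open Real

/-- For `3 ≤ η ≤ N` with `N` odd, `d_min-QAM(N,η)² > d_min-PSK(N,η)²`. -/
theorem qam_beats_psk_odd (η N : ℕ) (hη : 3 ≤ η) (hηN : η ≤ N) (hNo : Odd N) :
    2 ^ (N - η + 3) * (3 * (N : ℝ) / 2) / (2 ^ (N + 1) - 1)
      > 4 * (N : ℝ) * Real.sin (Real.pi / 2 ^ η) ^ 2 := by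
  have hN : 3 ≤ N := hη.trans hηN
  have hNR : (3:ℝ) ≤ (N:ℝ) := by exact_mod_cast hN
  have ht : (8:ℝ) ≤ 2 ^ η := by
    calc (8:ℝ) = 2 ^ 3 := by norm_num
    _ ≤ 2 ^ η := by
      apply pow_le_pow_right₀ one_le_two hη
  have ht0 : (0:ℝ) < 2 ^ η := by positivity
  have hP0 : (0:ℝ) < 2 ^ N := by positivity
  have hden : (0:ℝ) < 2 ^ (N+1) - 1 := by
    have h2 : (2:ℝ) ≤ 2 ^ (N+1) := by
      calc (2:ℝ) = 2 ^ 1 := by norm_num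
      _ ≤ 2 ^ (N+1) := by apply pow_le_pow_right₀ one_le_two; omega
    linarith
  have hx0 : 0 < Real.pi / 2 ^ η := by positivity
  have hxπ : Real.pi / 2 ^ η ≤ Real.pi := by
    apply div_le_self Real.pi_pos.le; linarith
  have hsnn : 0 ≤ Real.sin (Real.pi / 2 ^ η) :=
    Real.sin_nonneg_of_nonneg_of_le_pi hx0.le hxπ
  have hsle : Real.sin (Real.pi / 2 ^ η) ≤ Real.pi / 2 ^ η := Real.sin_le hx0.le
  have hsa : Real.sin (Real.pi / 2 ^ η) * 2 ^ η ≤ Real.pi := by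
    rw [← le_div_iff₀ ht0]; exact hsle
  have hπ2 : Real.pi ^ 2 < 10 := by nlinarith [Real.pi_lt_d2, Real.pi_pos]
  have hu : (Real.sin (Real.pi / 2 ^ η) * 2 ^ η) ^ 2 < 10 := by
    have h0 : 0 ≤ Real.sin (Real.pi / 2 ^ η) * 2 ^ η := by positivity
    nlinarith
  have hexp : (2:ℝ) ^ (N - η + 3) = 2 ^ N / 2 ^ η * 8 := by
    rw [pow_add, pow_sub₀ (2:ℝ) (by norm_num) hηN]; ring
  have hps : (2:ℝ) ^ (N + 1) = 2 ^ N * 2 := pow_succ 2 N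
  rw [hexp, hps, gt_iff_lt, lt_div_iff₀ (hps ▸ hden),
    show (2:ℝ) ^ N / 2 ^ η * 8 * (3 * (N:ℝ) / 2) = 2 ^ N * (12 * N) / 2 ^ η by ring,
    lt_div_iff₀ ht0]
  -- goal : 4 * N * sin^2 * (2^N * 2 - 1) * 2^η < 2^N * (12 * N)
  have hNpos : (0:ℝ) < N := by linarith
  have hND : (0:ℝ) < (N:ℝ) * (2 ^ N * 2 - 1) := by nlinarith
  have hNP : (0:ℝ) < (N:ℝ) * 2 ^ N := mul_pos hNpos hP0
  have hgoal' : 4 * (N:ℝ) * Real.sin (Real.pi / 2 ^ η) ^ 2 * (2 ^ N * 2 - 1) * 2 ^ η * 2 ^ η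
      < 2 ^ N * (12 * (N:ℝ)) * 2 ^ η := by
    nlinarith [hu, hND, hNP, ht, mul_pos hND (mul_pos ht0 ht0),
      mul_nonneg (mul_nonneg hsnn hsnn) hND.le]
  exact lt_of_mul_lt_mul_right hgoal' ht0.le
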